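/- For a finite simple graph G, F_+(G) = 0 if and only if Z_+(G) = 1. -/

import Mathlib

open SimpleGraph

variable {V : Type*}

/-- One step of the standard zero forcing color-change rule: a blue vertex `u`
whose unique white neighbor is `v` forces `v` to become blue. -/
def zfStep (G : SimpleGraph V) (B : Set V) : Set V :=
  B ∪ {v | v ∉ B ∧ ∃ u ∈ B, G.Adj u v ∧ ∀ w, G.Adj u w → w ∉ B → w = v}

/-- `S` is a zero forcing set: iterating the standard color-change rule from `S`
eventually colors every vertex blue. -/
def IsZeroForcingSet (G : SimpleGraph V) (S : Set V) : Prop :=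
  (⋃ n, (zfStep G)^[n] S) = Set.univ

/-- The failed zero forcing number `F(G)`: the maximum cardinality of a set that
is not a zero forcing set. -/
noncomputable def failedZF (G : SimpleGraph V) : ℕ :=
  sSup {n | ∃ S : Set V, ¬ IsZeroForcingSet G S ∧ S.ncard = n}

/-- The zero forcing number `Z(G)`. -/
noncomputable def zfNumber (G : SimpleGraph V) : ℕ :=
  sInf {n | ∃ S : Set V, IsZeroForcingSet G S ∧ S.ncard = n}

/-- One step of the positive semidefinite color-change rule. -/
def psdStep (G : SimpleGraph V) (B : Set V) : Set V :=
  B ∪ {v | ∃ (hv : v ∉ B), ∃ u ∈ B, G.Adj u v ∧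
        ∀ (w : V) (hw : w ∉ B), G.Adj u w →
          (G.induce {x | x ∉ B}).Reachable ⟨w, hw⟩ ⟨v, hv⟩ → w = v}

/-- `S` is a positive semidefinite zero forcing set. -/
def IsPSDZeroForcingSet (G : SimpleGraph V) (S : Set V) : Prop :=
  (⋃ n, (psdStep G)^[n] S) = Set.univ

/-- The failed positive semidefinite zero forcing number `F₊(G)`. -/
noncomputable def failedPSD (G : SimpleGraph V) : ℕ :=
  sSup {n | ∃ S : Set V, ¬ IsPSDZeroForcingSet G S ∧ S.ncard = n}

/-- The positive semidefinite zero forcing number `Z₊(G)`. -/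
noncomputable def psdZFNumber (G : SimpleGraph V) : ℕ :=
  sInf {n | ∃ S : Set V, IsPSDZeroForcingSet G S ∧ S.ncard = n}

section Aux

variable {G : SimpleGraph V} {B : Set V}

lemma subset_psdStep (G : SimpleGraph V) (B : Set V) : B ⊆ psdStep G B :=
  Set.subset_union_left

lemma psdStep_iterate_subset (G : SimpleGraph V) (S : Set V) {m n : ℕ} (h : m ≤ n) :
    (psdStep G)^[m] S ⊆ (psdStep G)^[n] S := by
  induction n with
  | zero =>
    have : m = 0 := by omega
    subst this; exact subset_rfl
  | succ n ih =>
    rcases Nat.lt_or_ge m (n + 1) with h' | h'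
    · intro x hx
      rw [Function.iterate_succ_apply']
      exact subset_psdStep G _ (ih (by omega) hx)
    · have hmn : m = n + 1 := le_antisymm h h'
      subst hmn; exact subset_rfl

lemma forced_of_mem {v : V} (hv' : v ∈ psdStep G B) (hv : v ∉ B) :
    ∃ u ∈ B, G.Adj u v ∧ ∀ (w : V) (hw : w ∉ B), G.Adj u w →
      (G.induce {x | x ∉ B}).Reachable ⟨w, hw⟩ ⟨v, hv⟩ → w = v := by
  rcases hv' with h | h
  · exact absurd h hv
  · obtain ⟨hv2, u, hu, hadj, hrule⟩ := h
    exact ⟨u, hu, hadj, hrule⟩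

lemma reach_mono {B B' : Set V} (hBB : B ⊆ B') {w1 w2 : V} (h1 : w1 ∉ B') (h2 : w2 ∉ B')
    (hr : (G.induce {x | x ∉ B'}).Reachable ⟨w1, h1⟩ ⟨w2, h2⟩) :
    (G.induce {x | x ∉ B}).Reachable ⟨w1, fun c => h1 (hBB c)⟩ ⟨w2, fun c => h2 (hBB c)⟩ := by
  have hsub : {x | x ∉ B'} ⊆ {x | x ∉ B} := fun x hx c => hx (hBB c)
  exact hr.map (G.induceHomOfLE hsub).toHom

lemma induce_reach_of_adj {w1 w2 : V} (h1 : w1 ∉ B) (h2 : w2 ∉ B)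
    (h : G.Adj w1 w2) : (G.induce {x | x ∉ B}).Reachable ⟨w1, h1⟩ ⟨w2, h2⟩ :=
  SimpleGraph.Adj.reachable (by simpa using h)


/-- Invariant: every "white component" has at most one blue neighbor. -/
def Kinv (G : SimpleGraph V) (B : Set V) : Prop :=
  ∀ ⦃u1 u2 w1 w2 : V⦄, u1 ∈ B → u2 ∈ B → ∀ (hw1 : w1 ∉ B) (hw2 : w2 ∉ B),
    G.Adj u1 w1 → G.Adj u2 w2 →
    (G.induce {x | x ∉ B}).Reachable ⟨w1, hw1⟩ ⟨w2, hw2⟩ → u1 = u2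

lemma kinv_mixed (hK : Kinv G B) {u1 u2 w1 w2 : V} (hu1 : u1 ∈ B)
    (hu2' : u2 ∈ psdStep G B) (hu2 : u2 ∉ B)
    (hw1 : w1 ∉ psdStep G B) (hw2 : w2 ∉ psdStep G B)
    (ha1 : G.Adj u1 w1) (ha2 : G.Adj u2 w2)
    (hr : (G.induce {x | x ∉ psdStep G B}).Reachable ⟨w1, hw1⟩ ⟨w2, hw2⟩) : False := by
  have hw1B : w1 ∉ B := fun h => hw1 (subset_psdStep G B h)
  have hw2B : w2 ∉ B := fun h => hw2 (subset_psdStep G B h)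
  obtain ⟨t, htB, htadj, trule⟩ := forced_of_mem hu2' hu2
  have hru : (G.induce {x | x ∉ B}).Reachable ⟨w2, hw2B⟩ ⟨u2, hu2⟩ :=
    induce_reach_of_adj hw2B hu2 ha2.symm
  have hrB := reach_mono (subset_psdStep G B) hw1 hw2 hr
  have h1 : u1 = t := hK hu1 htB hw1B hu2 ha1 htadj (hrB.trans hru)
  subst h1
  have hwu : w1 = u2 := trule w1 hw1B ha1 (hrB.trans hru)
  exact hw1 (hwu ▸ hu2')

lemma Kinv.psdStep_pres (hK : Kinv G B) : Kinv G (psdStep G B) := by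
  intro u1 u2 w1 w2 hu1 hu2 hw1 hw2 ha1 ha2 hr
  have hw1B : w1 ∉ B := fun h => hw1 (subset_psdStep G B h)
  have hw2B : w2 ∉ B := fun h => hw2 (subset_psdStep G B h)
  have hrB := reach_mono (subset_psdStep G B) hw1 hw2 hr
  by_cases h1 : u1 ∈ B <;> by_cases h2 : u2 ∈ B
  · exact hK h1 h2 hw1B hw2B ha1 ha2 hrB
  · exact (kinv_mixed hK h1 hu2 h2 hw1 hw2 ha1 ha2 hr).elim
  · exact (kinv_mixed hK h2 hu1 h1 hw2 hw1 ha2 ha1 hr.symm).elim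
  · obtain ⟨t1, ht1B, ht1adj, t1rule⟩ := forced_of_mem hu1 h1
    obtain ⟨t2, ht2B, ht2adj, t2rule⟩ := forced_of_mem hu2 h2
    have hr1 : (G.induce {x | x ∉ B}).Reachable ⟨u1, h1⟩ ⟨w1, hw1B⟩ :=
      induce_reach_of_adj h1 hw1B ha1
    have hr2 : (G.induce {x | x ∉ B}).Reachable ⟨w2, hw2B⟩ ⟨u2, h2⟩ :=
      induce_reach_of_adj hw2B h2 ha2.symm
    have ht : t1 = t2 := hK ht1B ht2B h1 h2 ht1adj ht2adj (hr1.trans (hrB.trans hr2))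
    subst ht
    exact (t1rule u2 h2 ht2adj (hr1.trans (hrB.trans hr2)).symm).symm

lemma kinv_singleton (a : V) : Kinv G {a} := by
  intro u1 u2 w1 w2 h1 h2 hw1 hw2 _ _ _
  rw [Set.mem_singleton_iff] at h1 h2
  rw [h1, h2]

lemma kinv_iterate (a : V) (n : ℕ) : Kinv G ((psdStep G)^[n] {a}) := by
  induction n with
  | zero => exact kinv_singleton a
  | succ n ih =>
    rw [Function.iterate_succ_apply']
    exact ih.psdStep_pres

lemma reach_of_mem_iterate (a : V) (n : ℕ) {v : V} (hv : v ∈ (psdStep G)^[n] {a}) :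
    G.Reachable a v := by
  induction n generalizing v with
  | zero =>
    rw [Function.iterate_zero_apply, Set.mem_singleton_iff] at hv
    rw [hv]
  | succ n ih =>
    rw [Function.iterate_succ_apply'] at hv
    rcases hv with h | h
    · exact ih h
    · obtain ⟨_, u, hu, hadj, -⟩ := h
      exact (ih hu).trans hadj.reachable

lemma exists_iterate_univ [Fintype V] {S : Set V} (h : IsPSDZeroForcingSet G S) :
    ∃ n, (psdStep G)^[n] S = Set.univ := by
  classical
  have hmem : ∀ v : V, ∃ n, v ∈ (psdStep G)^[n] S := by
    intro v
    have hv : v ∈ ⋃ n, (psdStep G)^[n] S := Set.eq_univ_iff_forall.mp h v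
    simpa [Set.mem_iUnion] using hv
  choose f hf using hmem
  refine ⟨Finset.univ.sup f, ?_⟩
  apply Set.eq_univ_iff_forall.mpr
  intro v
  exact psdStep_iterate_subset G S (Finset.le_sup (Finset.mem_univ v)) (hf v)

lemma white_adj_forced (hK : Kinv G B) {c d : V} (hc : c ∉ B) (hd : d ∉ B)
    (hadj : G.Adj c d) (hc' : c ∈ psdStep G B) (hd' : d ∈ psdStep G B) : False := by
  obtain ⟨u, huB, huadj, urule⟩ := forced_of_mem hc' hc
  obtain ⟨t, htB, htadj, trule⟩ := forced_of_mem hd' hd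
  have hr : (G.induce {x | x ∉ B}).Reachable ⟨d, hd⟩ ⟨c, hc⟩ :=
    induce_reach_of_adj hd hc hadj.symm
  have hut : u = t := hK huB htB hc hd huadj htadj hr.symm
  subst hut
  exact hadj.ne' (urule d hd htadj hr)


lemma exists_transition {P : ℕ → Prop} {m : ℕ} (h0 : ¬ P 0) (hm : P m) :
    ∃ n, ¬ P n ∧ P (n + 1) := by
  induction m with
  | zero => exact absurd hm h0
  | succ m ih =>
    by_cases h : P m
    · exact ih h
    · exact ⟨m, h, hm⟩

lemma length_eq_one_of_getVert_one_end {x y : V} {r : G.Walk x y} (hr : r.IsPath)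
    (hnil : ¬ r.Nil) (h1 : r.getVert 1 = y) : r.length = 1 := by
  have hcons := r.cons_tail_eq hnil
  have htail : r.tail.IsPath := by
    rw [← hcons] at hr
    exact ((Walk.cons_isPath_iff _ _).mp hr).1
  have hcopy : (r.tail.copy h1 rfl).IsPath := by rwa [Walk.isPath_copy]
  have hn : r.tail.copy h1 rfl = Walk.nil := Walk.isPath_iff_eq_nil.mp hcopy
  have hlen : r.tail.length = 0 := by
    have := congrArg Walk.length hn
    simpa [Walk.length_copy] using this
  have h2 := Walk.length_tail_add_one hnil
  omega

lemma cycle_getVert_one_ne_rev {c0 : V} {p : G.Walk c0 c0} (hp : p.IsCycle) :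
    p.getVert 1 ≠ p.reverse.getVert 1 := by
  intro heq
  have hnil : ¬ p.Nil := hp.not_nil
  have h3 : 3 ≤ p.length := hp.three_le_length
  have hcons := p.cons_tail_eq hnil
  have hq : p.tail.IsPath := by
    rw [← hcons] at hp
    exact ((Walk.cons_isCycle_iff _ _).mp hp).1
  have hqlen : p.tail.length + 1 = p.length := Walk.length_tail_add_one hnil
  have hqrnil : ¬ p.tail.reverse.Nil := by
    rw [Walk.nil_iff_length_eq, Walk.length_reverse]; omega
  -- p.tail.reverse : Walk c0 (p.getVert 1)
  have hg : p.tail.reverse.getVert 1 = p.getVert 1 := by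
    rw [Walk.getVert_reverse, Walk.getVert_tail p]
    have : p.tail.length - 1 + 1 = p.tail.length := by omega
    rw [this]
    have h' : p.reverse.getVert 1 = p.getVert (p.length - 1) := Walk.getVert_reverse p 1
    rw [show p.tail.length = p.length - 1 by omega, ← h', ← heq]
  have := length_eq_one_of_getVert_one_end hq.reverse hqrnil hg
  rw [Walk.length_reverse] at this
  omega

lemma acyclic_of_singleton_forcing [Fintype V] {a : V} (h : IsPSDZeroForcingSet G {a}) :
    G.IsAcyclic := by
  classical
  intro v c hc
  obtain ⟨m, hm⟩ := exists_iterate_univ h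
  have hP0 : ¬ ∀ x ∈ c.support, x ∈ (psdStep G)^[0] {a} := by
    intro hall
    have hnilc : ¬ c.Nil := hc.not_nil
    have h1 := hall v c.start_mem_support
    have hmem1 : c.getVert 1 ∈ c.support := by
      rw [Walk.mem_support_iff_exists_getVert]
      exact ⟨1, rfl, by have := hc.three_le_length; omega⟩
    have h2 := hall (c.getVert 1) hmem1
    rw [Function.iterate_zero_apply, Set.mem_singleton_iff] at h1 h2
    exact (c.adj_snd hnilc).ne (h1.trans h2.symm)
  have hPm : ∀ x ∈ c.support, x ∈ (psdStep G)^[m] {a} := by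
    rw [hm]; exact fun x _ => Set.mem_univ x
  obtain ⟨n, hn, hn1⟩ := exists_transition (P := fun n => ∀ x ∈ c.support, x ∈ (psdStep G)^[n] {a}) hP0 hPm
  have hK : Kinv G ((psdStep G)^[n] {a}) := kinv_iterate a n
  have hstep : ∀ x ∈ c.support, x ∈ psdStep G ((psdStep G)^[n] {a}) := by
    intro x hx
    have := hn1 x hx
    rwa [Function.iterate_succ_apply'] at this
  push_neg at hn
  obtain ⟨c0, hc0mem, hc0⟩ := hn
  set B := (psdStep G)^[n] {a} with hB
  set c' := c.rotate c0 hc0mem with hc'def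
  have hcyc : c'.IsCycle := hc.rotate hc0mem
  have hsub : ∀ x ∈ c'.support, x ∈ c.support := by
    intro x hx
    rw [c'.support_eq_cons] at hx
    rcases List.mem_cons.mp hx with rfl | hx'
    · exact hc0mem
    · exact List.mem_of_mem_tail
        (((Walk.support_rotate c c0 hc0mem).mem_iff).mp hx')
  have hstep' : ∀ x ∈ c'.support, x ∈ psdStep G B := fun x hx => hstep x (hsub x hx)
  have hnil : ¬ c'.Nil := hcyc.not_nil
  have h3 : 3 ≤ c'.length := hcyc.three_le_length
  have hrnil : ¬ c'.reverse.Nil := by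
    rw [Walk.nil_iff_length_eq, Walk.length_reverse]; omega
  set d1 := c'.getVert 1 with hd1def
  set d2 := c'.reverse.getVert 1 with hd2def
  have adj1 : G.Adj c0 d1 := c'.adj_snd hnil
  have adj2 : G.Adj c0 d2 := c'.reverse.adj_snd hrnil
  have hd1mem : d1 ∈ c'.support := by
    rw [Walk.mem_support_iff_exists_getVert]
    exact ⟨1, rfl, by omega⟩
  have hd2mem : d2 ∈ c'.support := by
    have : d2 = c'.getVert (c'.length - 1) := Walk.getVert_reverse c' 1
    rw [Walk.mem_support_iff_exists_getVert]
    exact ⟨c'.length - 1, this.symm, by omega⟩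
  have hd1d2 : d1 ≠ d2 := cycle_getVert_one_ne_rev hcyc
  have hc0' : c0 ∈ psdStep G B := hstep' c0 c'.start_mem_support
  by_cases hd1B : d1 ∈ B
  · by_cases hd2B : d2 ∈ B
    · exact hd1d2 (hK hd1B hd2B hc0 hc0 adj1.symm adj2.symm (Reachable.refl _))
    · exact white_adj_forced hK hc0 hd2B adj2 hc0' (hstep' d2 hd2mem)
  · exact white_adj_forced hK hc0 hd1B adj1 hc0' (hstep' d1 hd1mem)

lemma exists_force (hpc : G.Preconnected) (hac : G.IsAcyclic) {B : Set V}
    (hne : B.Nonempty) (hnu : B ≠ Set.univ) : ∃ v, v ∉ B ∧ v ∈ psdStep G B := by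
  classical
  obtain ⟨b, hb⟩ := hne
  obtain ⟨y, hy⟩ : ∃ y, y ∉ B := by
    by_contra hco
    push_neg at hco
    exact hnu (Set.eq_univ_iff_forall.mpr hco)
  obtain ⟨p⟩ := hpc b y
  obtain ⟨d, -, hdf, hds⟩ := p.exists_boundary_dart B hb hy
  have hadj : G.Adj d.fst d.snd := d.adj
  refine ⟨d.snd, hds, Set.mem_union_right _ ⟨hds, d.fst, hdf, hadj, ?_⟩⟩
  intro w hw hadjw hr
  by_contra hwv
  have hpu := isAcyclic_iff_path_unique.mp hac
  obtain ⟨pw⟩ := hr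
  let pg : G.Walk w d.snd := pw.map (SimpleGraph.Embedding.induce {x | x ∉ B}).toHom
  have hsupp : ∀ x ∈ pg.support, x ∉ B := by
    intro x hx
    rw [show pg.support = pw.support.map _ from Walk.support_map _ pw] at hx
    obtain ⟨⟨x', hx'⟩, -, rfl⟩ := List.mem_map.mp hx
    exact hx'
  have hup : d.fst ∉ (pg.toPath : G.Walk w d.snd).support := fun hu' =>
    hsupp d.fst (Walk.support_toPath_subset pg hu') hdf
  have hP2 : (Walk.cons hadjw (pg.toPath : G.Walk w d.snd)).IsPath :=
    (pg.toPath.2).cons hup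
  have heq := hpu (Path.singleton hadj) ⟨Walk.cons hadjw pg.toPath, hP2⟩
  have hlen := congrArg (fun q : G.Path d.fst d.snd => (q : G.Walk d.fst d.snd).length) heq
  simp only [Path.singleton, Walk.length_cons, Walk.length_nil] at hlen
  have hne0 : (pg.toPath : G.Walk w d.snd).length ≠ 0 := by
    intro h0
    exact hwv ((Walk.nil_iff_length_eq.mpr h0).eq)
  omega

lemma psdStep_empty : psdStep G (∅ : Set V) = ∅ := by
  apply Set.eq_empty_iff_forall_notMem.mpr
  intro v hv
  rcases hv with hv | hv
  · exact hv
  · obtain ⟨-, u, hu, -⟩ := hv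
    exact hu

lemma empty_not_forcing [Nonempty V] : ¬ IsPSDZeroForcingSet G (∅ : Set V) := by
  have hiter : ∀ n, (psdStep G)^[n] (∅ : Set V) = ∅ := by
    intro n
    induction n with
    | zero => rfl
    | succ n ih => rw [Function.iterate_succ_apply', ih, psdStep_empty]
  intro h
  have hv : (Classical.arbitrary V) ∈ ⋃ n, (psdStep G)^[n] (∅ : Set V) :=
    Set.eq_univ_iff_forall.mp h _
  rw [Set.mem_iUnion] at hv
  obtain ⟨n, hn⟩ := hv
  rw [hiter n] at hn
  exact hn

lemma forcing_of_nonempty [Fintype V] (hpc : G.Preconnected) (hac : G.IsAcyclic)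
    {S : Set V} (hS : S.Nonempty) : IsPSDZeroForcingSet G S := by
  have key : ∀ n : ℕ, (psdStep G)^[n] S = Set.univ ∨ n ≤ ((psdStep G)^[n] S).ncard := by
    intro n
    induction n with
    | zero => exact Or.inr (Nat.zero_le _)
    | succ n ih =>
      by_cases hu : (psdStep G)^[n] S = Set.univ
      · left
        rw [Function.iterate_succ_apply', hu]
        exact Set.univ_subset_iff.mp (subset_psdStep G _)
      · rcases ih with h | h
        · exact absurd h hu
        · right
          have hSn : ((psdStep G)^[n] S).Nonempty := by
            obtain ⟨s0, hs0⟩ := hS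
            exact ⟨s0, psdStep_iterate_subset G S (Nat.zero_le n) hs0⟩
          obtain ⟨v, hv, hv'⟩ := exists_force hpc hac hSn hu
          rw [Function.iterate_succ_apply']
          have hsub : insert v ((psdStep G)^[n] S) ⊆ psdStep G ((psdStep G)^[n] S) := by
            intro x hx
            rcases hx with rfl | hx
            · exact hv'
            · exact subset_psdStep G _ hx
          have hcard : n + 1 ≤ (insert v ((psdStep G)^[n] S)).ncard := by
            rw [Set.ncard_insert_of_notMem hv (Set.toFinite _)]
            omega
          exact hcard.trans (Set.ncard_le_ncard hsub (Set.toFinite _))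
  have huniv : (psdStep G)^[Fintype.card V + 1] S = Set.univ := by
    rcases key (Fintype.card V + 1) with h | h
    · exact h
    · exfalso
      have hle := Set.ncard_le_ncard (Set.subset_univ ((psdStep G)^[Fintype.card V + 1] S))
        Set.finite_univ
      rw [Set.ncard_univ, Nat.card_eq_fintype_card] at hle
      omega
  apply Set.eq_univ_of_univ_subset
  rw [← huniv]
  exact Set.subset_iUnion (fun n => (psdStep G)^[n] S) _

end Aux

/-- `F₊(G) = 0` iff `Z₊(G) = 1`. -/
theorem failedPSD_eq_zero_iff_psdZFNumber_eq_one [Fintype V] [Nonempty V]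
    (G : SimpleGraph V) :
    failedPSD G = 0 ↔ psdZFNumber G = 1 := by
  classical
  constructor
  · intro hF
    rw [failedPSD] at hF
    have hbdd : BddAbove {n | ∃ S : Set V, ¬ IsPSDZeroForcingSet G S ∧ S.ncard = n} := by
      refine ⟨Fintype.card V, ?_⟩
      rintro n ⟨S, -, rfl⟩
      simpa [Set.ncard_univ, Nat.card_eq_fintype_card] using
        Set.ncard_le_ncard (Set.subset_univ S) Set.finite_univ
    have hsing : ∀ b : V, IsPSDZeroForcingSet G {b} := by
      intro b
      by_contra hbad
      have h1 : 1 ∈ {n | ∃ S : Set V, ¬ IsPSDZeroForcingSet G S ∧ S.ncard = n} :=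
        ⟨{b}, hbad, Set.ncard_singleton b⟩
      have := le_csSup hbdd h1
      omega
    obtain ⟨b⟩ := (inferInstance : Nonempty V)
    have h1mem : 1 ∈ {n | ∃ S : Set V, IsPSDZeroForcingSet G S ∧ S.ncard = n} :=
      ⟨{b}, hsing b, Set.ncard_singleton b⟩
    have hle : psdZFNumber G ≤ 1 := Nat.sInf_le h1mem
    have hne0 : psdZFNumber G ≠ 0 := by
      intro h0
      have hmem : psdZFNumber G ∈ {n | ∃ S : Set V, IsPSDZeroForcingSet G S ∧ S.ncard = n} :=
        Nat.sInf_mem ⟨1, h1mem⟩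
      rw [h0] at hmem
      obtain ⟨S, hSf, hS0⟩ := hmem
      rw [Set.ncard_eq_zero (Set.toFinite S)] at hS0
      subst hS0
      exact empty_not_forcing hSf
    omega
  · intro hZ
    have hne : {n | ∃ S : Set V, IsPSDZeroForcingSet G S ∧ S.ncard = n}.Nonempty := by
      by_contra hco
      rw [Set.not_nonempty_iff_eq_empty] at hco
      rw [psdZFNumber, hco, Nat.sInf_empty] at hZ
      exact absurd hZ one_ne_zero.symm
    have hmem : (1 : ℕ) ∈ {n | ∃ S : Set V, IsPSDZeroForcingSet G S ∧ S.ncard = n} := by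
      rw [← hZ]
      exact Nat.sInf_mem hne
    obtain ⟨S, hSforce, hS1⟩ := hmem
    obtain ⟨a, rfl⟩ := Set.ncard_eq_one.mp hS1
    have hav : ∀ v : V, G.Reachable a v := by
      intro v
      have hv : v ∈ ⋃ n, (psdStep G)^[n] {a} := Set.eq_univ_iff_forall.mp hSforce v
      rw [Set.mem_iUnion] at hv
      obtain ⟨n, hn⟩ := hv
      exact reach_of_mem_iterate a n hn
    have hpc : G.Preconnected := fun x y => (hav x).symm.trans (hav y)
    have hac := acyclic_of_singleton_forcing hSforce
    have hset : {n | ∃ S : Set V, ¬ IsPSDZeroForcingSet G S ∧ S.ncard = n} = {0} := by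
      ext n
      constructor
      · rintro ⟨T, hT, rfl⟩
        rcases T.eq_empty_or_nonempty with rfl | hTne
        · simp
        · exact absurd (forcing_of_nonempty hpc hac hTne) hT
      · intro hn
        rw [Set.mem_singleton_iff] at hn
        subst hn
        exact ⟨∅, empty_not_forcing, Set.ncard_empty V⟩
    rw [failedPSD, hset, csSup_singleton]
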